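/- For every prime p and integers l, d ≥ 1, m ≥ 1 and 0 ≤ j ≤ m − 1 there exists a constant C = C(l, d, p, j) with the following property. Let G be a countable discrete abelian group, let X be an ergodic G-system, and let P : X → ℤ/p^mℤ be a measurable additive phase polynomial of degree < d. Let b_j : ℤ/p^mℤ → {0, 1, …, p−1} send an element to the j-th base-p digit of its unique representative in {0, 1, …, p^m − 1}, and embed {0, 1, …, p−1} into ℤ/p^lℤ in the obvious manner. Then the map x ↦ b_j(P(x)), viewed as a map X → ℤ/p^lℤ, is an additive phase polynomial of degree < C. -/

import Mathlib

open MeasureTheory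
open scoped symmDiff

/-- `P : X → A` is an additive phase polynomial of degree `< k` with respect to the action
`T` of `G` on `(X, μ)`: all `k`-fold additive derivatives `Δ⁺_{h₁} ⋯ Δ⁺_{h_k} P` vanish
almost everywhere, where `Δ⁺_g P = P ∘ T_g - P`. -/
def AddPhasePoly {G X A : Type*} [MeasurableSpace X] [AddCommGroup A]
    (T : G → X → X) (μ : Measure X) : ℕ → (X → A) → Prop
  | 0, P => ∀ᵐ x ∂μ, P x = 0
  | (k + 1), P => ∀ g : G, AddPhasePoly T μ k (fun x => P (T g x) - P x)

/-- The action `T` of `G` on `(X, μ)` is ergodic. -/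
def IsErgodicAction {G X : Type*} [MeasurableSpace X] (T : G → X → X)
    (μ : Measure X) : Prop :=
  ∀ A : Set X, MeasurableSet A → (∀ g : G, μ ((T g ⁻¹' A) ∆ A) = 0) → μ A = 0 ∨ μ A = 1

/-! ### Auxiliary material -/

/-- Pointwise (everywhere) phase polynomials on a group. -/
def PtPoly {A B : Type*} [AddCommGroup A] [AddCommGroup B] : ℕ → (A → B) → Prop
  | 0, f => f = 0
  | (k + 1), f => ∀ a : A, PtPoly k (fun y => f (y + a) - f y)

section MeasureLemmas

variable {G X : Type*} [AddCommGroup G] [MeasurableSpace X] {μ : Measure X} {T : G → X → X}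

lemma T_comm (hco : ∀ g g', T (g + g') = T g ∘ T g') (g h : G) (x : X) :
    T g (T h x) = T h (T g x) := by
  have h1 : T g ∘ T h = T h ∘ T g := by rw [← hco, ← hco, add_comm]
  exact congrFun h1 x

lemma app_zero {A : Type*} [AddCommGroup A] :
    ∀ k : ℕ, AddPhasePoly T μ k (fun _ : X => (0 : A)) := by
  intro k; induction k with
  | zero => simp [AddPhasePoly]
  | succ k ih =>
      simp only [AddPhasePoly]
      intro g
      simpa using ih

lemma app_congr {A : Type*} [AddCommGroup A] (hT : ∀ g, MeasurePreserving (T g) μ μ) :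
    ∀ k : ℕ, ∀ {P Q : X → A}, AddPhasePoly T μ k P → P =ᵐ[μ] Q → AddPhasePoly T μ k Q := by
  intro k; induction k with
  | zero =>
      intro P Q h hpq
      simp only [AddPhasePoly] at h ⊢
      filter_upwards [h, hpq] with x h1 h2
      rw [← h2]; exact h1
  | succ k ih =>
      intro P Q h hpq
      simp only [AddPhasePoly] at h ⊢
      intro g
      refine ih (h g) ?_
      have hc : P ∘ T g =ᵐ[μ] Q ∘ T g := (hT g).quasiMeasurePreserving.ae_eq hpq
      filter_upwards [hc, hpq] with x h1 h2
      have h1' : P (T g x) = Q (T g x) := h1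
      rw [h1', h2]

lemma app_comp_T {A : Type*} [AddCommGroup A] (hT : ∀ g, MeasurePreserving (T g) μ μ)
    (hco : ∀ g g', T (g + g') = T g ∘ T g') (g : G) :
    ∀ k : ℕ, ∀ {P : X → A}, AddPhasePoly T μ k P →
      AddPhasePoly T μ k (fun x => P (T g x)) := by
  intro k; induction k with
  | zero =>
      intro P h
      simp only [AddPhasePoly] at h ⊢
      have h' : P =ᵐ[μ] (fun _ => (0 : A)) := h
      have := (hT g).quasiMeasurePreserving.ae_eq h'
      exact this
  | succ k ih =>
      intro P h
      simp only [AddPhasePoly] at h ⊢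
      intro g'
      have h2 := ih (h g')
      have heq : (fun x => (fun y => P (T g' y) - P y) (T g x))
          = fun x => P (T g (T g' x)) - P (T g x) := by
        funext x; simp only []; rw [T_comm hco]
      rw [heq] at h2
      exact h2

lemma app_succ {A : Type*} [AddCommGroup A] (hT : ∀ g, MeasurePreserving (T g) μ μ)
    (hco : ∀ g g', T (g + g') = T g ∘ T g') :
    ∀ k : ℕ, ∀ {P : X → A}, AddPhasePoly T μ k P → AddPhasePoly T μ (k + 1) P := by
  intro k; induction k with
  | zero =>
      intro P h
      simp only [AddPhasePoly] at h ⊢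
      intro g
      have hc : P ∘ T g =ᵐ[μ] (fun _ => (0 : A)) ∘ T g :=
        (hT g).quasiMeasurePreserving.ae_eq h
      filter_upwards [hc, h] with x h1 h2
      have h1' : P (T g x) = 0 := h1
      rw [h1', h2, sub_zero]
  | succ k ih =>
      intro P h
      simp only [AddPhasePoly] at h ⊢
      intro g g'
      have h2 := ih (h g')
      simp only [AddPhasePoly] at h2
      have h3 := h2 g
      have heq : (fun x => (fun y => P (T g' y) - P y) (T g x) - (fun y => P (T g' y) - P y) x)
          = fun x => (fun y => P (T g y) - P y) (T g' x) - (fun y => P (T g y) - P y) x := by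
        funext x; simp only []
        rw [T_comm hco]
        abel
      rw [heq] at h3
      exact h3

lemma app_mono {A : Type*} [AddCommGroup A] (hT : ∀ g, MeasurePreserving (T g) μ μ)
    (hco : ∀ g g', T (g + g') = T g ∘ T g') {k k' : ℕ} (hk : k ≤ k') {P : X → A}
    (h : AddPhasePoly T μ k P) : AddPhasePoly T μ k' P := by
  induction hk with
  | refl => exact h
  | step h' ih => exact app_succ hT hco _ ih

lemma app_add {A : Type*} [AddCommGroup A] :
    ∀ k : ℕ, ∀ {P Q : X → A}, AddPhasePoly T μ k P → AddPhasePoly T μ k Q →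
      AddPhasePoly T μ k (fun x => P x + Q x) := by
  intro k; induction k with
  | zero =>
      intro P Q hP hQ
      simp only [AddPhasePoly] at hP hQ ⊢
      filter_upwards [hP, hQ] with x h1 h2
      rw [h1, h2, add_zero]
  | succ k ih =>
      intro P Q hP hQ
      simp only [AddPhasePoly] at hP hQ ⊢
      intro g
      have heq : (fun x => (P (T g x) + Q (T g x)) - (P x + Q x))
          = fun x => (P (T g x) - P x) + (Q (T g x) - Q x) := by
        funext x; abel
      rw [heq]
      exact ih (hP g) (hQ g)

lemma app_sum {A : Type*} [AddCommGroup A] {ι : Type*} [DecidableEq ι] (k : ℕ) :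
    ∀ (s : Finset ι) (F : ι → X → A), (∀ i ∈ s, AddPhasePoly T μ k (F i)) →
      AddPhasePoly T μ k (fun x => ∑ i ∈ s, F i x) := by
  intro s
  induction s using Finset.induction_on with
  | empty => intro F _; simpa using app_zero k
  | insert a s ha ih =>
      intro F hF
      have heq : (fun x => ∑ i ∈ insert a s, F i x)
          = fun x => F a x + ∑ i ∈ s, F i x := by
        funext x; rw [Finset.sum_insert ha]
      rw [heq]
      exact app_add _ (hF a (Finset.mem_insert_self a s))
        (ih F fun i hi => hF i (Finset.mem_insert_of_mem hi))

lemma app_hom {A B : Type*} [AddCommGroup A] [AddCommGroup B] (φ : A →+ B) :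
    ∀ k : ℕ, ∀ {P : X → A}, AddPhasePoly T μ k P →
      AddPhasePoly T μ k (fun x => φ (P x)) := by
  intro k; induction k with
  | zero =>
      intro P h
      simp only [AddPhasePoly] at h ⊢
      filter_upwards [h] with x hx
      rw [hx, map_zero]
  | succ k ih =>
      intro P h
      simp only [AddPhasePoly] at h ⊢
      intro g
      have heq : (fun x => φ (P (T g x)) - φ (P x)) = fun x => φ (P (T g x) - P x) := by
        funext x; rw [map_sub]
      rw [heq]
      exact ih (h g)

lemma app_mul {B : Type*} [CommRing B] (hT : ∀ g, MeasurePreserving (T g) μ μ)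
    (hco : ∀ g g', T (g + g') = T g ∘ T g') :
    ∀ k₁ : ℕ, ∀ {P : X → B}, AddPhasePoly T μ k₁ P →
      ∀ k₂ : ℕ, ∀ {Q : X → B}, AddPhasePoly T μ k₂ Q →
      AddPhasePoly T μ (k₁ + k₂) (fun x => P x * Q x) := by
  intro k₁
  induction k₁ with
  | zero =>
      intro P hP k₂ Q hQ
      rw [zero_add]
      refine app_congr hT k₂ (app_zero k₂) ?_
      simp only [AddPhasePoly] at hP
      filter_upwards [hP] with x hx
      rw [hx, zero_mul]
  | succ a ih =>
      intro P hP k₂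
      induction k₂ with
      | zero =>
          intro Q hQ
          refine app_congr hT _ (app_zero _) ?_
          simp only [AddPhasePoly] at hQ
          filter_upwards [hQ] with x hx
          rw [hx, mul_zero]
      | succ b ih2 =>
          intro Q hQ
          have hn : a + 1 + (b + 1) = (a + (b + 1)) + 1 := by omega
          rw [hn]
          simp only [AddPhasePoly] at hP hQ
          intro g
          have heq : (fun x => P (T g x) * Q (T g x) - P x * Q x)
              = fun x => (P (T g x) - P x) * Q (T g x) + P x * (Q (T g x) - Q x) := by
            funext x; ring
          rw [heq]
          apply app_add
          · exact ih (hP g) (b + 1) (app_comp_T hT hco g (b + 1) hQ)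
          · have h2 := ih2 (hQ g)
            have hn2 : a + 1 + b = a + (b + 1) := by omega
            rw [hn2] at h2
            exact h2

end MeasureLemmas

/-- Degree bound for composition. -/
def cb (s : ℕ) : ℕ → ℕ → ℕ
  | 0, _ => 1
  | _ + 1, 0 => 0
  | d + 1, e + 1 => cb s d s + cb s (d + 1) e + 1

section Comp

variable {G X : Type*} [AddCommGroup G] [MeasurableSpace X] {μ : Measure X} {T : G → X → X}

set_option linter.unusedSectionVars false

lemma app_comp {A : Type*} [AddCommGroup A] [Fintype A] [DecidableEq A]
    {B : Type*} [CommRing B]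
    (hT : ∀ g, MeasurePreserving (T g) μ μ)
    (hco : ∀ g g', T (g + g') = T g ∘ T g')
    (s : ℕ) (hs : ∀ f : A → B, PtPoly s f) :
    ∀ d : ℕ, ∀ e : ℕ, ∀ f : A → B, PtPoly e f → ∀ P : X → A, AddPhasePoly T μ d P →
      AddPhasePoly T μ (cb s d e) (fun x => f (P x)) := by
  intro d
  induction d with
  | zero =>
      intro e f hf P hP
      rw [show cb s 0 e = 1 by simp [cb]]
      intro g
      simp only [AddPhasePoly] at hP ⊢
      have hc : P ∘ T g =ᵐ[μ] (fun _ => (0 : A)) ∘ T g :=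
        (hT g).quasiMeasurePreserving.ae_eq hP
      filter_upwards [hc, hP] with x h1 h2
      have h1' : P (T g x) = 0 := h1
      rw [h1', h2, sub_self]
  | succ d ihd =>
      intro e
      induction e with
      | zero =>
          intro f hf P hP
          have hf0 : f = 0 := hf
          subst hf0
          rw [show cb s (d+1) 0 = 0 by simp [cb]]
          simp [AddPhasePoly]
      | succ e ihe =>
          intro f hf P hP
          rw [show cb s (d+1) (e+1) = cb s d s + cb s (d + 1) e + 1 by rw [cb]]
          intro g
          have heq : (fun x => f (P (T g x)) - f (P x))
              = fun x => ∑ a : A,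
                  (if P (T g x) - P x = a then (1 : B) else 0) * (f (P x + a) - f (P x)) := by
            funext x
            rw [Finset.sum_eq_single (P (T g x) - P x)]
            · have hpa : P x + (P (T g x) - P x) = P (T g x) := by abel
              rw [if_pos rfl, hpa, one_mul]
            · intro b _ hb
              rw [if_neg fun h => hb h.symm, zero_mul]
            · intro hmem; exact absurd (Finset.mem_univ _) hmem
          rw [heq]
          apply app_sum
          intro a _
          have h1 : AddPhasePoly T μ (cb s d s)
              (fun x => (fun z => if z = a then (1 : B) else 0) (P (T g x) - P x)) :=
            ihd s (fun z => if z = a then (1 : B) else 0) (hs _)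
              (fun x => P (T g x) - P x) (hP g)
          have h2 : AddPhasePoly T μ (cb s (d + 1) e)
              (fun x => (fun y => f (y + a) - f y) (P x)) :=
            ihe (fun y => f (y + a) - f y) (hf a) P hP
          exact app_mul hT hco _ h1 _ h2


end Comp

section Alg

variable (n q : ℕ)

/-- The shift-by-one endomorphism on functions `ZMod n → ZMod q`. -/
def shiftEnd : Module.End ℤ (ZMod n → ZMod q) where
  toFun f := fun y => f (y + 1)
  map_add' f g := rfl
  map_smul' c f := rfl

lemma shiftEnd_pow_apply (k : ℕ) (f : ZMod n → ZMod q) (y : ZMod n) :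
    ((shiftEnd n q ^ k) f) y = f (y + (k : ZMod n)) := by
  induction k generalizing f y with
  | zero => simp
  | succ k ih =>
      rw [pow_succ']
      have h0 : ((shiftEnd n q * shiftEnd n q ^ k) f) y = ((shiftEnd n q ^ k) f) (y + 1) := rfl
      rw [h0, ih]
      congr 1
      push_cast
      ring

lemma shiftEnd_pow_n : shiftEnd n q ^ n = 1 := by
  apply LinearMap.ext; intro f; funext y
  rw [shiftEnd_pow_apply, ZMod.natCast_self, add_zero]
  rfl

lemma commute_geom (m : ℕ) :
    Commute (shiftEnd n q - 1) (∑ i ∈ Finset.range m, shiftEnd n q ^ i) := by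
  refine Commute.sum_right _ _ _ fun i _ => ?_
  exact Commute.sub_left ((Commute.refl _).pow_right i) (Commute.one_left _)

lemma ptpoly_of_pow [NeZero n] :
    ∀ k : ℕ, ∀ f : ZMod n → ZMod q, ((shiftEnd n q - 1) ^ k) f = 0 → PtPoly k f := by
  intro k
  induction k with
  | zero =>
      intro f h
      have : f = 0 := by simpa using h
      exact this
  | succ k ih =>
      intro f h a
      apply ih
      set S := shiftEnd n q with hS
      set v := a.val with hv
      have hgeom : (∑ i ∈ Finset.range v, S ^ i) * (S - 1) = S ^ v - 1 := geom_sum_mul S v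
      have hfa : (fun y => f (y + a) - f y) = (S ^ v - 1) f := by
        funext y
        have : (S ^ v) f y = f (y + (v : ZMod n)) := shiftEnd_pow_apply n q v f y
        have hva : ((v : ℕ) : ZMod n) = a := ZMod.natCast_rightInverse a
        simp only [LinearMap.sub_apply, Pi.sub_apply, Module.End.one_apply]
        rw [this, hva]
      rw [hfa, ← Module.End.mul_apply, ← hgeom]
      have hre : (S - 1) ^ k * ((∑ i ∈ Finset.range v, S ^ i) * (S - 1))
          = (∑ i ∈ Finset.range v, S ^ i) * (S - 1) ^ (k + 1) := by
        rw [← mul_assoc, ((commute_geom n q v).pow_left k).eq, mul_assoc, ← pow_succ]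
      rw [hre, Module.End.mul_apply, h, map_zero]

end Alg

section AlgNil

/-- Generic ring lemma: if `S^n = 1` with `n = k0+2`, the middle binomial coefficients are
divisible by `p`, and `(-1)^n + 1` is divisible by `p`, then `(S-1)^n` is `p` times
something. -/
lemma ring_nilp {E : Type*} [Ring E] (S : E) (p n k0 : ℕ) (hn : n = k0 + 2)
    (hS : S ^ n = 1) (hch : ∀ i, 0 < i → i < n → p ∣ n.choose i)
    (hext : ∃ u : ℤ, ((-1 : ℤ) ^ n + 1) = (p : ℤ) * u) :
    ∃ c : E, (S - 1) ^ n = (p : ℤ) • c := by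
  subst hn
  set n := k0 + 2 with hn
  have hc : Commute S (-1 : E) := (Commute.one_right S).neg_right
  have h1 : (S - 1) ^ n = ∑ i ∈ Finset.range (n + 1),
      ((-1 : ℤ) ^ (n - i) * (n.choose i : ℤ)) • S ^ i := by
    rw [sub_eq_add_neg, hc.add_pow]
    refine Finset.sum_congr rfl fun i _ => ?_
    rw [zsmul_eq_mul']
    push_cast
    rw [mul_assoc]
  have h2 : (S - 1) ^ n
      = (∑ i ∈ Finset.range (k0 + 1),
          ((-1 : ℤ) ^ (n - (i+1)) * (n.choose (i+1) : ℤ)) • S ^ (i+1))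
        + ((-1 : ℤ) ^ n * (n.choose 0 : ℤ)) • S ^ 0
        + ((-1 : ℤ) ^ (n - n) * (n.choose n : ℤ)) • S ^ n := by
    rw [h1]
    show ∑ i ∈ Finset.range (k0 + 2 + 1), _ = _
    rw [Finset.sum_range_succ, Finset.sum_range_succ']
    rfl
  have hmid : ∀ i ∈ Finset.range (k0 + 1), ∃ w : ℤ,
      ((-1 : ℤ) ^ (n - (i+1)) * (n.choose (i+1) : ℤ)) = (p : ℤ) * w := by
    intro i hi
    rw [Finset.mem_range] at hi
    obtain ⟨w0, hw0⟩ := hch (i+1) (by omega) (by omega)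
    exact ⟨(-1 : ℤ) ^ (n - (i+1)) * w0, by rw [hw0]; push_cast; ring⟩
  choose w hw using hmid
  have h3 : (∑ i ∈ Finset.range (k0 + 1),
          ((-1 : ℤ) ^ (n - (i+1)) * (n.choose (i+1) : ℤ)) • S ^ (i+1))
      = (p : ℤ) • ∑ i ∈ Finset.attach (Finset.range (k0 + 1)),
          (w i.1 i.2) • S ^ (i.1 + 1) := by
    rw [Finset.smul_sum, ← Finset.sum_attach (Finset.range (k0+1))
      (fun i => ((-1 : ℤ) ^ (n - (i+1)) * (n.choose (i+1) : ℤ)) • S ^ (i+1))]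
    refine Finset.sum_congr rfl fun i _ => ?_
    rw [hw i.1 i.2, mul_smul]
  obtain ⟨u, hu⟩ := hext
  refine ⟨(∑ i ∈ Finset.attach (Finset.range (k0 + 1)), (w i.1 i.2) • S ^ (i.1 + 1))
      + u • 1, ?_⟩
  rw [h2, h3, hS]
  simp only [Nat.choose_self, Nat.choose_zero_right, Nat.sub_self, pow_zero, Nat.cast_one,
    mul_one, one_mul, one_smul]
  rw [smul_add, add_assoc]
  congr 1
  calc ((-1 : ℤ) ^ n) • (1 : E) + 1
      = ((-1 : ℤ) ^ n + 1) • 1 := by rw [add_smul]; simp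
    _ = ((p : ℤ) * u) • 1 := by rw [hu]
    _ = (p : ℤ) • u • (1 : E) := by rw [mul_smul]

lemma shift_sub_one_pow_eq (p t l : ℕ) (hp : p.Prime) :
    ∃ c : Module.End ℤ (ZMod (p ^ (t+1)) → ZMod (p ^ l)),
      (shiftEnd (p ^ (t+1)) (p ^ l) - 1) ^ (p ^ (t+1)) = (p : ℤ) • c := by
  have hn2 : 2 ≤ p ^ (t+1) := by
    calc 2 ≤ p := hp.two_le
    _ = p ^ 1 := (pow_one p).symm
    _ ≤ p ^ (t+1) := Nat.pow_le_pow_right hp.pos (by omega)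
  refine ring_nilp _ p _ (p ^ (t+1) - 2) (by omega) (shiftEnd_pow_n _ _) ?_ ?_
  · intro i h0 hi
    exact hp.dvd_choose_pow (by omega) (by omega)
  · rcases hp.eq_two_or_odd' with h2' | hodd
    · have heven : Even (p ^ (t+1)) := by
        subst h2'
        exact ⟨2 ^ t, by rw [← two_mul, ← pow_succ']⟩
      refine ⟨1, ?_⟩
      rw [heven.neg_one_pow, h2']
      norm_num
    · have hoddn : Odd (p ^ (t+1)) := hodd.pow
      refine ⟨0, ?_⟩
      rw [hoddn.neg_one_pow]
      ring

lemma ptpoly_all (p t l : ℕ) (hp : p.Prime) (f : ZMod (p^(t+1)) → ZMod (p^l)) :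
    PtPoly (p^(t+1) * l) f := by
  haveI : NeZero (p^(t+1)) := ⟨pow_ne_zero _ hp.ne_zero⟩
  apply ptpoly_of_pow
  obtain ⟨c, hc⟩ := shift_sub_one_pow_eq p t l hp
  rw [pow_mul, hc, smul_pow]
  have hz : ((p : ℤ) ^ l) • ((c ^ l) f) = (0 : ZMod (p^(t+1)) → ZMod (p^l)) := by
    funext y
    simp only [Pi.smul_apply, zsmul_eq_mul, Pi.zero_apply]
    have hcast : (((p : ℤ) ^ l : ℤ) : ZMod (p^l)) = 0 := by
      push_cast
      have h5 : ((p : ZMod (p^l))) ^ l = ((p ^ l : ℕ) : ZMod (p^l)) := by push_cast; ring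
      rw [h5, ZMod.natCast_self]
    rw [hcast, zero_mul]
  rw [LinearMap.smul_apply]
  exact hz

end AlgNil

/-- For every prime `p` and integers `l, d ≥ 1` and `j`, there exists a
constant `C = C(l, d, p, j)` such that for every `m ≥ 1` with `j ≤ m - 1`, every ergodic
`G`-system `X` (with `G` countable discrete abelian), and every additive phase polynomial
`P : X → ℤ/p^mℤ` of degree `< d`, the `j`-th base-`p` digit `x ↦ b_j (P x)`, viewed as a
map into `ℤ/p^lℤ`, is an additive phase polynomial of degree `< C`. -/
theorem digit_of_additive_phase_polynomial_is_phase_polynomial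
    (p l d j : ℕ) (hp : p.Prime) (hl : 1 ≤ l) (hd : 1 ≤ d) :
    ∃ C : ℕ,
      ∀ (m : ℕ), 1 ≤ m → j ≤ m - 1 →
      ∀ (G : Type) [AddCommGroup G] [Countable G]
        (X : Type) [MeasurableSpace X] (μ : Measure X) [IsProbabilityMeasure μ]
        (T : G → X → X),
        (∀ g, MeasurePreserving (T g) μ μ) → T 0 = id →
        (∀ g g', T (g + g') = T g ∘ T g') → IsErgodicAction T μ →
      ∀ (P : X → ZMod (p ^ m)),
        (∀ a : ZMod (p ^ m), MeasurableSet (P ⁻¹' {a})) →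
        AddPhasePoly T μ d P →
        AddPhasePoly T μ C
          (fun x => ((((P x).val / p ^ j) % p : ℕ) : ZMod (p ^ l))) := by
  classical
  refine ⟨cb (p ^ (j+1) * l) d (p ^ (j+1) * l), ?_⟩
  intro m hm hjm G _iG _cG X _mX μ _pm T hT hT0 hco _herg P _hmeas hP
  haveI : NeZero (p ^ m) := ⟨pow_ne_zero _ hp.ne_zero⟩
  haveI : NeZero (p ^ (j+1)) := ⟨pow_ne_zero _ hp.ne_zero⟩
  have htm : p ^ (j+1) ∣ p ^ m := pow_dvd_pow p (by omega)
  set φ := ZMod.castHom htm (ZMod (p ^ (j+1))) with hφ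
  set Q : X → ZMod (p ^ (j+1)) := fun x => φ (P x) with hQ
  have hQpoly : AddPhasePoly T μ d Q := app_hom φ.toAddMonoidHom d hP
  set χ : ZMod (p ^ (j+1)) → ZMod (p ^ l) :=
    fun a => ((a.val / p ^ j % p : ℕ) : ZMod (p ^ l)) with hχ
  have hkey : (fun x => ((((P x).val / p ^ j) % p : ℕ) : ZMod (p ^ l)))
      = fun x => χ (Q x) := by
    funext x
    simp only [hχ, hQ]
    congr 1
    have hv : (φ (P x)).val = (P x).val % p ^ (j+1) := by
      rw [ZMod.castHom_apply, ← ZMod.natCast_val, ZMod.val_natCast]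
    rw [hv, pow_succ, Nat.mod_mul_right_div_self, Nat.mod_mod_of_dvd _ (dvd_refl p)]
  rw [hkey]
  exact app_comp hT hco (p ^ (j+1) * l) (fun f => ptpoly_all p j l hp f) d (p ^ (j+1) * l)
    χ (ptpoly_all p j l hp χ) Q hQpoly
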